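/- For the monomial μ(y) = (y₁/h)^{α₁} (y₂/h)^{α₂} with α₁, α₂ nonnegative even integers, the operator value A(0, τ)μ = (1/2π) ∫_{|z|<1} [μ(cτz) + cτ ∇μ(cτz)·z] / √(1-|z|²) dz equals (α₁-1)!!(α₂-1)!!/(α₁+α₂-1)!! · λ^{α₁+α₂}, where λ = cτ/h. -/

import Mathlib

open MeasureTheory Real Nat

open Set

lemma df_ne (n : ℕ) : (n‼ : ℝ) ≠ 0 := by
  exact_mod_cast (Nat.doubleFactorial_pos n).ne'

lemma K_cos (a : ℕ) : (∫ θ in (-π)..π, cos θ ^ (2*a)) = 2*π*((2*a-1)‼ : ℝ)/((2*a)‼ : ℝ) := by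
  induction a with
  | zero => norm_num; ring
  | succ n ih =>
    have h2 : 2*(n+1) = 2*n+2 := by ring
    rw [h2, integral_cos_pow, ih]
    have e1 : (2*n+2)‼ = (2*n+2) * (2*n)‼ := Nat.doubleFactorial_add_two _
    have e2 : (2*n+1)‼ = (2*n+1) * (2*n-1)‼ := Nat.doubleFactorial_add_one _
    have e3 : (2*n+2-1 : ℕ) = 2*n+1 := by omega
    rw [e3, e1, e2]
    have hne : ((2*n)‼ : ℝ) ≠ 0 := df_ne _
    simp only [Real.sin_pi, Real.sin_neg, neg_zero, mul_zero, zero_mul, sub_zero, zero_sub,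
      neg_neg, zero_div, zero_add, mul_neg, neg_neg, sub_neg_eq_add]
    push_cast
    field_simp

lemma K_rec (a b : ℕ) :
    (2*(a:ℝ)+1) * ∫ θ in (-π)..π, cos θ^(2*a)*sin θ^(2*b+2)
      = (2*(b:ℝ)+1) * ∫ θ in (-π)..π, cos θ^(2*a+2)*sin θ^(2*b) := by
  have hder : ∀ θ : ℝ, HasDerivAt (fun θ : ℝ => cos θ^(2*a+1) * sin θ^(2*b+1))
      ((2*(b:ℝ)+1) * (cos θ^(2*a+2)*sin θ^(2*b)) - (2*(a:ℝ)+1) * (cos θ^(2*a)*sin θ^(2*b+2))) θ := by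
    intro θ
    have h1 : HasDerivAt (fun θ : ℝ => cos θ^(2*a+1))
        ((2*(a:ℝ)+1) * cos θ^(2*a) * (-sin θ)) θ := by
      have := (Real.hasDerivAt_cos θ).fun_pow (2*a+1)
      simpa using this.congr_deriv (by push_cast; ring)
    have h2 : HasDerivAt (fun θ : ℝ => sin θ^(2*b+1))
        ((2*(b:ℝ)+1) * sin θ^(2*b) * cos θ) θ := by
      have := (Real.hasDerivAt_sin θ).fun_pow (2*b+1)
      simpa using this.congr_deriv (by push_cast; ring)
    have := h1.fun_mul h2
    refine this.congr_deriv ?_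
    ring
  have hint1 : IntervalIntegrable (fun θ : ℝ => cos θ^(2*a)*sin θ^(2*b+2)) volume (-π) π := by
    apply Continuous.intervalIntegrable; fun_prop
  have hint2 : IntervalIntegrable (fun θ : ℝ => cos θ^(2*a+2)*sin θ^(2*b)) volume (-π) π := by
    apply Continuous.intervalIntegrable; fun_prop
  have h0 : (∫ θ in (-π)..π, ((2*(b:ℝ)+1) * (cos θ^(2*a+2)*sin θ^(2*b))
      - (2*(a:ℝ)+1) * (cos θ^(2*a)*sin θ^(2*b+2)))) = 0 := by
    rw [intervalIntegral.integral_eq_sub_of_hasDerivAt (fun θ _ => hder θ)]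
    · simp [Real.sin_pi, Real.sin_neg]
    · exact (hint2.const_mul _).sub (hint1.const_mul _)
  rw [intervalIntegral.integral_sub (hint2.const_mul _) (hint1.const_mul _),
    intervalIntegral.integral_const_mul, intervalIntegral.integral_const_mul] at h0
  linarith

lemma K_fact (a b : ℕ) : (∫ θ in (-π)..π, cos θ^(2*a) * sin θ^(2*b))
    = 2*π*((2*a-1)‼ : ℝ)*((2*b-1)‼ : ℝ)/((2*a+2*b)‼ : ℝ) := by
  induction b generalizing a with
  | zero =>
    simpa [mul_comm, mul_assoc, mul_div_assoc] using K_cos a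
  | succ n ih =>
    have hrec := K_rec a n
    have hih := ih (a+1)
    have ha : (2*(a:ℝ)+1) ≠ 0 := by positivity
    have h1 : 2*(a+1) = 2*a+2 := by ring
    rw [h1] at hih
    have h2 : (2*(n+1) : ℕ) = 2*n+2 := by ring
    rw [h2]
    have key : (∫ θ in (-π)..π, cos θ^(2*a) * sin θ^(2*n+2))
        = (2*(n:ℝ)+1)/(2*(a:ℝ)+1) * ∫ θ in (-π)..π, cos θ^(2*a+2)*sin θ^(2*n) := by
      field_simp
      linarith [hrec]
    rw [key, hih]
    have e1 : ((2*a+2-1 : ℕ)‼ : ℝ) = (2*(a:ℝ)+1) * ((2*a-1 : ℕ)‼ : ℝ) := by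
      have : (2*a+2-1 : ℕ) = 2*a+1 := by omega
      rw [this, Nat.doubleFactorial_add_one]
      push_cast; ring
    have e2 : ((2*n+2-1 : ℕ)‼ : ℝ) = (2*(n:ℝ)+1) * ((2*n-1 : ℕ)‼ : ℝ) := by
      have : (2*n+2-1 : ℕ) = 2*n+1 := by omega
      rw [this, Nat.doubleFactorial_add_one]
      push_cast; ring
    have e3 : (2*a+2+2*n : ℕ) = 2*a+(2*n+2) := by omega
    rw [e1, e2, e3]
    field_simp

lemma phi_intInt (m : ℕ) :
    IntervalIntegrable (fun r : ℝ => r ^ m / Real.sqrt (1 - r ^ 2)) volume 0 1 := by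
  have hg : IntervalIntegrable (fun r : ℝ => (1 - r) ^ (-(1/2) : ℝ)) volume 0 1 := by
    have := (intervalIntegral.intervalIntegrable_rpow' (a := 0) (b := 1)
      (r := (-(1/2) : ℝ)) (by norm_num)).comp_sub_left 1
    simpa using this.symm
  rw [intervalIntegrable_iff_integrableOn_Ioo_of_le (by norm_num)] at hg ⊢
  apply hg.mono' ((measurable_id.pow_const m).div
    ((measurable_const.sub (measurable_id.pow_const 2)).sqrt)).aestronglyMeasurable
  filter_upwards [ae_restrict_mem measurableSet_Ioo] with r hr
  obtain ⟨hr0, hr1⟩ := hr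
  have h1 : (0:ℝ) < 1 - r := by linarith
  have h2 : Real.sqrt (1 - r) ≤ Real.sqrt (1 - r^2) := by
    apply Real.sqrt_le_sqrt; nlinarith
  have h3 : (0:ℝ) < Real.sqrt (1 - r) := Real.sqrt_pos.mpr h1
  have h4 : r ^ m ≤ 1 := pow_le_one₀ hr0.le hr1.le
  have h5 : (1 - r) ^ (-(1/2) : ℝ) = (Real.sqrt (1 - r))⁻¹ := by
    rw [Real.rpow_neg h1.le, Real.sqrt_eq_rpow]
  simp only [id_eq, Real.norm_eq_abs, Pi.div_apply, Pi.sub_apply]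
  rw [abs_div, abs_of_nonneg (pow_nonneg hr0.le m),
    abs_of_nonneg (Real.sqrt_nonneg _), h5]
  rw [div_le_iff₀ (lt_of_lt_of_le h3 h2), inv_mul_eq_div, le_div_iff₀ h3]
  calc r ^ m * Real.sqrt (1 - r) ≤ 1 * Real.sqrt (1 - r^2) :=
    mul_le_mul h4 h2 (Real.sqrt_nonneg _) (by norm_num)
    _ = Real.sqrt (1 - r^2) := one_mul _

lemma sqrt_deriv {x : ℝ} (hx : x ∈ Ioo (0:ℝ) 1) :
    HasDerivAt (fun r : ℝ => Real.sqrt (1 - r^2)) (-x / Real.sqrt (1 - x^2)) x := by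
  obtain ⟨h0, h1⟩ := hx
  have hne : (1:ℝ) - x^2 ≠ 0 := by nlinarith
  have hinner : HasDerivAt (fun r : ℝ => 1 - r^2) (-(2*x)) x := by
    simpa using ((hasDerivAt_pow 2 x).const_sub 1)
  have := (Real.hasDerivAt_sqrt hne).comp x hinner
  refine this.congr_deriv ?_
  rw [mul_neg, one_div, ← div_eq_inv_mul, mul_div_mul_left _ _ two_ne_zero, neg_div]

lemma I_one : (∫ r in (0:ℝ)..1, r ^ 1 / Real.sqrt (1 - r^2)) = 1 := by
  have hcont : ContinuousOn (fun r : ℝ => -Real.sqrt (1-r^2)) (Icc 0 1) := by fun_prop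
  have hderiv : ∀ x ∈ Ioo (0:ℝ) 1,
      HasDerivWithinAt (fun r : ℝ => -Real.sqrt (1-r^2)) (x^1 / Real.sqrt (1-x^2)) (Ioi x) x := by
    intro x hx
    have := (sqrt_deriv hx).neg
    refine this.hasDerivWithinAt.congr_deriv ?_
    have hpos : (0:ℝ) < Real.sqrt (1 - x^2) := Real.sqrt_pos.mpr (by nlinarith [hx.1, hx.2])
    field_simp
  rw [intervalIntegral.integral_eq_sub_of_hasDeriv_right_of_le (by norm_num) hcont hderiv
    (phi_intInt 1)]
  norm_num

lemma I_rec (m : ℕ) : (∫ r in (0:ℝ)..1, r^(m+2) / Real.sqrt (1-r^2))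
    = ((m:ℝ)+1)/((m:ℝ)+2) * ∫ r in (0:ℝ)..1, r^m / Real.sqrt (1-r^2) := by
  set G : ℝ → ℝ := fun r => -(r^(m+1) * Real.sqrt (1-r^2)) / ((m:ℝ)+2) with hG
  have hcont : ContinuousOn G (Icc 0 1) := by
    apply ContinuousOn.div_const
    apply ContinuousOn.neg
    fun_prop
  have hderiv : ∀ x ∈ Ioo (0:ℝ) 1, HasDerivWithinAt G
      (x^(m+2) / Real.sqrt (1-x^2) - ((m:ℝ)+1)/((m:ℝ)+2) * (x^m / Real.sqrt (1-x^2)))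
      (Ioi x) x := by
    intro x hx
    have hpos : (0:ℝ) < Real.sqrt (1 - x^2) := Real.sqrt_pos.mpr (by nlinarith [hx.1, hx.2])
    have hs2 : Real.sqrt (1-x^2) ^ 2 = 1 - x^2 := Real.sq_sqrt (by nlinarith [hx.1, hx.2])
    have h1 : HasDerivAt (fun r : ℝ => r^(m+1)) ((m+1 : ℝ) * x^m) x := by
      simpa using hasDerivAt_pow (m+1) x
    have h2 := (h1.mul (sqrt_deriv hx)).neg.div_const ((m:ℝ)+2)
    refine h2.hasDerivWithinAt.congr_deriv ?_
    field_simp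
    linear_combination (-(((m:ℝ)+1) * x^m)) * hs2
  have key := intervalIntegral.integral_eq_sub_of_hasDeriv_right_of_le (by norm_num : (0:ℝ) ≤ 1)
    hcont hderiv ((phi_intInt (m+2)).sub ((phi_intInt m).const_mul (((m:ℝ)+1)/((m:ℝ)+2))))
  rw [intervalIntegral.integral_sub (phi_intInt (m+2)) ((phi_intInt m).const_mul _),
    intervalIntegral.integral_const_mul] at key
  have hG1 : G 1 = 0 := by simp [hG]
  have hG0 : G 0 = 0 := by simp [hG]
  rw [hG1, hG0] at key
  linarith

lemma I_odd (k : ℕ) : (∫ r in (0:ℝ)..1, r^(2*k+1) / Real.sqrt (1-r^2))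
    = ((2*k)‼ : ℝ) / ((2*k+1)‼ : ℝ) := by
  induction k with
  | zero => simpa using I_one
  | succ n ih =>
    have h1 : 2*(n+1)+1 = (2*n+1)+2 := by ring
    rw [h1, I_rec, ih]
    have e1 : ((2*(n+1) : ℕ)‼ : ℝ) = (2*(n:ℝ)+2) * ((2*n : ℕ)‼ : ℝ) := by
      have : (2*(n+1) : ℕ) = 2*n+2 := by ring
      rw [this, Nat.doubleFactorial_add_two]; push_cast; ring
    have e2 : (((2*n+1)+2 : ℕ)‼ : ℝ) = (2*(n:ℝ)+3) * ((2*n+1 : ℕ)‼ : ℝ) := by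
      rw [Nat.doubleFactorial_add_two]; push_cast; ring
    rw [e1, e2]
    have h3 : ((2*n+1 : ℕ)‼ : ℝ) ≠ 0 := df_ne _
    have h4 : (2*(n:ℝ)+3) ≠ 0 := by positivity
    push_cast
    field_simp
    ring

lemma J_disk (a b : ℕ) :
    (∫ z in {z : ℝ × ℝ | z.1^2 + z.2^2 < 1},
      z.1^(2*a) * z.2^(2*b) / Real.sqrt (1 - (z.1^2 + z.2^2)))
    = 2*π*((2*a-1)‼ : ℝ)*((2*b-1)‼ : ℝ)/((2*a+2*b+1)‼ : ℝ) := by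
  set D : Set (ℝ × ℝ) := {z : ℝ × ℝ | z.1^2 + z.2^2 < 1} with hD
  set Φf : ℝ × ℝ → ℝ := fun z => z.1^(2*a) * z.2^(2*b) / Real.sqrt (1 - (z.1^2 + z.2^2)) with hΦf
  have hDmeas : MeasurableSet D := by
    apply measurableSet_lt _ measurable_const
    exact (measurable_fst.pow_const 2).add (measurable_snd.pow_const 2)
  have step1 : (∫ z in D, Φf z) = ∫ z, D.indicator Φf z := (integral_indicator hDmeas).symm
  rw [step1, ← integral_comp_polarCoord_symm]
  have htarget : polarCoord.target = Ioi (0:ℝ) ×ˢ Ioo (-π) π := rfl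
  set F : ℝ × ℝ → ℝ :=
    (Ioo (0:ℝ) 1 ×ˢ Ioo (-π) π).indicator
      (fun q => (q.1^(2*(a+b)+1) / Real.sqrt (1 - q.1^2)) * (cos q.2^(2*a) * sin q.2^(2*b)))
    with hF
  have heq : EqOn (fun p : ℝ × ℝ => p.1 • D.indicator Φf (polarCoord.symm p)) F
      polarCoord.target := by
    rintro ⟨r, θ⟩ hp
    rw [htarget] at hp
    obtain ⟨hr, hθ⟩ := hp
    simp only [mem_Ioi] at hr
    have hsymm : polarCoord.symm (r, θ) = (r * cos θ, r * sin θ) := rfl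
    have hsum : (r * cos θ)^2 + (r * sin θ)^2 = r^2 := by
      rw [mul_pow, mul_pow, ← mul_add, Real.cos_sq_add_sin_sq, mul_one]
    by_cases hr1 : r < 1
    · have hmemD : polarCoord.symm (r, θ) ∈ D := by
        rw [hsymm]; show (r * cos θ)^2 + (r * sin θ)^2 < 1
        rw [hsum]; nlinarith
      have hmemP : (r, θ) ∈ Ioo (0:ℝ) 1 ×ˢ Ioo (-π) π := ⟨⟨hr, hr1⟩, hθ⟩
      show r • D.indicator Φf (polarCoord.symm (r, θ)) = F (r, θ)
      rw [Set.indicator_of_mem hmemD, hF, Set.indicator_of_mem hmemP]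
      rw [hsymm, hΦf]
      show r * ((r * cos θ)^(2*a) * (r * sin θ)^(2*b) /
        Real.sqrt (1 - ((r * cos θ)^2 + (r * sin θ)^2))) = _
      rw [hsum, mul_pow, mul_pow]
      have : r^(2*(a+b)+1) = r * (r^(2*a) * r^(2*b)) := by rw [← pow_add]; ring
      rw [this]
      ring
    · have hmemD : polarCoord.symm (r, θ) ∉ D := by
        rw [hsymm]; show ¬((r * cos θ)^2 + (r * sin θ)^2 < 1)
        rw [hsum]; push_neg; nlinarith
      have hmemP : (r, θ) ∉ Ioo (0:ℝ) 1 ×ˢ Ioo (-π) π := by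
        intro hmem; exact hr1 hmem.1.2
      show r • D.indicator Φf (polarCoord.symm (r, θ)) = F (r, θ)
      rw [Set.indicator_of_notMem hmemD, hF, Set.indicator_of_notMem hmemP, smul_zero]
  have htargetMeas : MeasurableSet polarCoord.target := by
    rw [htarget]; exact (measurableSet_Ioi.prod measurableSet_Ioo)
  rw [setIntegral_congr_fun htargetMeas heq, hF]
  rw [setIntegral_indicator (measurableSet_Ioo.prod measurableSet_Ioo)]
  have hinter : polarCoord.target ∩ (Ioo (0:ℝ) 1 ×ˢ Ioo (-π) π)
      = Ioo (0:ℝ) 1 ×ˢ Ioo (-π) π := by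
    rw [htarget, Set.prod_inter_prod]
    congr 1
    · exact Set.inter_eq_right.mpr Ioo_subset_Ioi_self
    · exact Set.inter_self _
  rw [hinter]
  rw [Measure.volume_eq_prod, setIntegral_prod_mul
    (fun r : ℝ => r^(2*(a+b)+1) / Real.sqrt (1 - r^2))
    (fun θ : ℝ => cos θ^(2*a) * sin θ^(2*b)) (Ioo (0:ℝ) 1) (Ioo (-π) π)]
  have hIoo1 : (∫ r in Ioo (0:ℝ) 1, r^(2*(a+b)+1) / Real.sqrt (1 - r^2))
      = ∫ r in (0:ℝ)..1, r^(2*(a+b)+1) / Real.sqrt (1 - r^2) := by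
    rw [intervalIntegral.integral_of_le (by norm_num), integral_Ioc_eq_integral_Ioo]
  have hIoo2 : (∫ θ in Ioo (-π) π, cos θ^(2*a) * sin θ^(2*b))
      = ∫ θ in (-π)..π, cos θ^(2*a) * sin θ^(2*b) := by
    rw [intervalIntegral.integral_of_le (by linarith [Real.pi_pos]),
      integral_Ioc_eq_integral_Ioo]
  rw [hIoo1, hIoo2, I_odd, K_fact]
  have h1 : ((2*a+2*b : ℕ)‼ : ℝ) ≠ 0 := df_ne _
  have h2 : ((2*a+2*b+1 : ℕ)‼ : ℝ) ≠ 0 := df_ne _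
  have e : (2*(a+b) : ℕ) = 2*a+2*b := by ring
  rw [e]
  field_simp

lemma fder_apply (h : ℝ) (α₁ α₂ : ℕ) (p z : ℝ × ℝ) :
    fderiv ℝ (fun y : ℝ × ℝ => (y.1/h)^α₁ * (y.2/h)^α₂) p z
      = ((α₁:ℝ) * (p.1/h)^(α₁-1) * (1/h)) * (p.2/h)^α₂ * z.1
        + (p.1/h)^α₁ * ((α₂:ℝ) * (p.2/h)^(α₂-1) * (1/h)) * z.2 := by
  have e1 : HasFDerivAt (fun y : ℝ × ℝ => (y.1/h)^α₁)
      (((α₁:ℝ) * (p.1/h)^(α₁-1) * (1/h)) • ContinuousLinearMap.fst ℝ ℝ ℝ) p := by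
    have hd : HasDerivAt (fun t : ℝ => (t/h)^α₁) ((α₁:ℝ) * (p.1/h)^(α₁-1) * (1/h)) p.1 := by
      have := ((hasDerivAt_id p.1).div_const h).fun_pow α₁
      simpa [one_div] using this
    exact hd.comp_hasFDerivAt p hasFDerivAt_fst
  have e2 : HasFDerivAt (fun y : ℝ × ℝ => (y.2/h)^α₂)
      (((α₂:ℝ) * (p.2/h)^(α₂-1) * (1/h)) • ContinuousLinearMap.snd ℝ ℝ ℝ) p := by
    have hd : HasDerivAt (fun t : ℝ => (t/h)^α₂) ((α₂:ℝ) * (p.2/h)^(α₂-1) * (1/h)) p.2 := by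
      have := ((hasDerivAt_id p.2).div_const h).fun_pow α₂
      simpa [one_div] using this
    exact hd.comp_hasFDerivAt p hasFDerivAt_snd
  rw [(e1.fun_mul e2).fderiv]
  simp only [ContinuousLinearMap.add_apply, ContinuousLinearMap.smul_apply,
    ContinuousLinearMap.coe_fst', ContinuousLinearMap.coe_snd', smul_eq_mul]
  ring



noncomputable def Aop (c τ : ℝ) (x : ℝ × ℝ) (f : ℝ × ℝ → ℝ) : ℝ :=
  (1 / (2 * Real.pi)) * ∫ z in {z : ℝ × ℝ | z.1 ^ 2 + z.2 ^ 2 < 1},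
    (f (x.1 + c * τ * z.1, x.2 + c * τ * z.2) +
      c * τ * fderiv ℝ f (x.1 + c * τ * z.1, x.2 + c * τ * z.2) z) /
      Real.sqrt (1 - (z.1 ^ 2 + z.2 ^ 2))

/-- A(0,τ)μ for μ(y) = (y₁/h)^α₁ (y₂/h)^α₂ with α₁,α₂ even equals
(α₁-1)!!(α₂-1)!!/(α₁+α₂-1)!! · λ^{α₁+α₂}, λ = cτ/h. -/
theorem Aop_monomial_even (c τ h : ℝ) (hc : 0 < c) (hτ : 0 < τ) (hh : 0 < h)
    (α₁ α₂ : ℕ) (h₁ : Even α₁) (h₂ : Even α₂) :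
    Aop c τ (0, 0) (fun y => (y.1 / h) ^ α₁ * (y.2 / h) ^ α₂) =
      ((α₁ - 1)‼ * (α₂ - 1)‼ : ℝ) / ((α₁ + α₂ - 1)‼ : ℝ) * (c * τ / h) ^ (α₁ + α₂) := by
  obtain ⟨a, rfl⟩ := h₁
  obtain ⟨b, rfl⟩ := h₂
  simp only [← two_mul]
  have hne : h ≠ 0 := hh.ne'
  have key : ∀ (α : ℕ) (w : ℝ), (α:ℝ) * w^(α-1) * w = (α:ℝ) * w^α := by
    intro α w
    cases α with
    | zero => simp
    | succ n => simp only [Nat.add_sub_cancel, pow_succ]; push_cast; ring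
  have hint : ∀ z : ℝ × ℝ,
      ((c*τ*z.1/h)^(2*a) * (c*τ*z.2/h)^(2*b)
        + c*τ * fderiv ℝ (fun y : ℝ × ℝ => (y.1/h)^(2*a) * (y.2/h)^(2*b))
          (c*τ*z.1, c*τ*z.2) z)
        / Real.sqrt (1 - (z.1^2 + z.2^2))
      = ((2*(a:ℝ)+2*(b:ℝ)+1) * (c*τ/h)^(2*a+2*b))
          * (z.1^(2*a) * z.2^(2*b) / Real.sqrt (1 - (z.1^2 + z.2^2))) := by
    intro z
    rw [fder_apply]
    conv_rhs => rw [← mul_div_assoc]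
    congr 1
    have k1 := key (2*a) ((c*τ/h)*z.1)
    have k2 := key (2*b) ((c*τ/h)*z.2)
    have hl1 : c*τ*z.1/h = (c*τ/h)*z.1 := by ring
    have hl2 : c*τ*z.2/h = (c*τ/h)*z.2 := by ring
    rw [hl1, hl2]
    have expand2 : (2*(a:ℝ)+2*(b:ℝ)+1) * (c*τ/h)^(2*a+2*b) * (z.1^(2*a) * z.2^(2*b))
        = (2*(a:ℝ)+2*(b:ℝ)+1) * (((c*τ/h)*z.1)^(2*a) * ((c*τ/h)*z.2)^(2*b)) := by
      ring
    rw [expand2]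
    set u := (c*τ/h)*z.1 with hu
    set v := (c*τ/h)*z.2 with hv
    have e1 : c*τ*z.1 * (1/h) = u := by rw [hu]; field_simp
    have e2 : c*τ*z.2 * (1/h) = v := by rw [hv]; field_simp
    calc u^(2*a) * v^(2*b)
          + c*τ*(((2*a:ℕ):ℝ) * u^(2*a-1) * (1/h) * v^(2*b) * z.1
            + u^(2*a) * (((2*b:ℕ):ℝ) * v^(2*b-1) * (1/h)) * z.2)
        = u^(2*a) * v^(2*b)
          + (((2*a:ℕ):ℝ) * u^(2*a-1) * (c*τ*z.1 * (1/h))) * v^(2*b)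
          + u^(2*a) * (((2*b:ℕ):ℝ) * v^(2*b-1) * (c*τ*z.2 * (1/h))) := by ring
      _ = u^(2*a) * v^(2*b)
          + (((2*a:ℕ):ℝ) * u^(2*a-1) * u) * v^(2*b)
          + u^(2*a) * (((2*b:ℕ):ℝ) * v^(2*b-1) * v) := by rw [e1, e2]
      _ = u^(2*a) * v^(2*b) + (((2*a:ℕ):ℝ) * u^(2*a)) * v^(2*b)
          + u^(2*a) * (((2*b:ℕ):ℝ) * v^(2*b)) := by rw [k1, k2]
      _ = (2*(a:ℝ)+2*(b:ℝ)+1) * (u^(2*a) * v^(2*b)) := by push_cast; ring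
  simp only [Aop, zero_add]
  simp only [hint]
  rw [MeasureTheory.integral_const_mul, J_disk a b]
  have edf : ((2*a+2*b+1 : ℕ)‼ : ℝ) = (2*(a:ℝ)+2*(b:ℝ)+1) * ((2*a+2*b-1 : ℕ)‼ : ℝ) := by
    rw [Nat.doubleFactorial_add_one]
    push_cast; ring
  rw [edf]
  have h1 : ((2*a-1 : ℕ)‼ : ℝ) ≠ 0 := df_ne _
  have h2 : ((2*b-1 : ℕ)‼ : ℝ) ≠ 0 := df_ne _
  have h3 : ((2*a+2*b-1 : ℕ)‼ : ℝ) ≠ 0 := df_ne _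
  have h4 : (2*(a:ℝ)+2*(b:ℝ)+1) ≠ 0 := by positivity
  have hπ : (π:ℝ) ≠ 0 := Real.pi_ne_zero
  push_cast
  field_simp
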